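/- Let D be an integral domain, g ∈ D[X], d ∈ D \ {0}, and let a₀, a₁, …, a_{n−1} ∈ D be elements (not necessarily distinct). Set p(X) = ∏_{i=0}^{n−1}(X − a_i). Then g lies in the ideal dD[X] + pD[X] of D[X] if and only if for every k with 0 ≤ k < n, the divided difference value Φᵏ(g)(a₀, …, a_k) lies in the principal ideal dD. -/

import Mathlib

open Polynomial

/-- `IntOn D K S` is the set of polynomials `f ∈ K[X]` that are integer-valued on the set
`S ⊆ Mₙ(D)`: for every `M ∈ S`, evaluating `f` at the image of `M` in `Mₙ(K)` yields a matrix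
all of whose entries lie in (the image of) `D`. -/
def IntOn (D K : Type*) [CommRing D] [Field K] [Algebra D K] {n : ℕ}
    (S : Set (Matrix (Fin n) (Fin n) D)) : Set (Polynomial K) :=
  {f | ∀ M ∈ S, ∀ i j, ∃ d : D,
    algebraMap D K d = (Polynomial.aeval (M.map (algebraMap D K)) f) i j}

/-- `IsDivDiff R Φ` says that the family `Φ` assigns to each polynomial `g ∈ R[X]` and each
`k ∈ ℕ` its `k`-th divided difference, the polynomial `Φᵏ(g) ∈ R[X₀,…,X_k]` characterized
recursively by `Φ⁰(g)(X₀) = g(X₀)` and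
`Φᵏ(g)(X₀,…,X_k)·(X_{k−1} − X_k) = Φ^{k−1}(g)(X₀,…,X_{k−1}) − Φ^{k−1}(g)(X₀,…,X_{k−2},X_k)`. -/
def IsDivDiff (R : Type*) [CommRing R]
    (Φ : ∀ k : ℕ, Polynomial R → MvPolynomial (Fin (k + 1)) R) : Prop :=
  (∀ g : Polynomial R, Φ 0 g = Polynomial.aeval (MvPolynomial.X 0) g) ∧
  (∀ (k : ℕ) (g : Polynomial R),
    Φ (k + 1) g *
        (MvPolynomial.X (Fin.castSucc (Fin.last k)) - MvPolynomial.X (Fin.last (k + 1))) =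
      MvPolynomial.rename Fin.castSucc (Φ k g) -
        MvPolynomial.rename
          (fun i => if i = Fin.last k then Fin.last (k + 1) else Fin.castSucc i) (Φ k g))

/-- Let `D` be a domain, `g ∈ D[X]`, `d ∈ D \ {0}`, and `a₀,…,a_{n−1} ∈ D`
(not necessarily distinct); set `p = ∏ᵢ (X − aᵢ)`.  Then `g ∈ dD[X] + pD[X]` iff for every
`0 ≤ k < n` the divided difference value `Φᵏ(g)(a₀,…,a_k)` lies in `dD`. -/
lemma aeval_C_eval {R : Type*} [CommRing R] {σ : Type*} (f : σ → R) (φ : MvPolynomial σ R) :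
    MvPolynomial.aeval (fun i => Polynomial.C (f i)) φ = Polynomial.C (MvPolynomial.eval f φ) := by
  induction φ using MvPolynomial.induction_on with
  | C a => simp
  | add p q hp hq => simp [hp, hq]
  | mul_X p i hp => simp [hp]

lemma indep {R : Type*} [CommRing R] :
    ∀ (n : ℕ) (c : ℕ → R) (q : ℕ → Polynomial R),
      (∀ k, (q k).Monic) → (∀ k, (q k).natDegree = k) →
      (∑ k ∈ Finset.range n, Polynomial.C (c k) * q k) = 0 →
      ∀ k, k < n → c k = 0 := by
  intro n
  induction n with
  | zero => intro c q _ _ _ k hk; omega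
  | succ n ih =>
    intro c q hm hdeg hsum k hk
    have hcn : c n = 0 := by
      have h0 : (∑ k ∈ Finset.range (n+1), Polynomial.C (c k) * q k).coeff n = 0 := by
        rw [hsum]; simp
      rw [Finset.sum_range_succ, Polynomial.coeff_add, Polynomial.finset_sum_coeff] at h0
      have h1 : ∀ j ∈ Finset.range n, (Polynomial.C (c j) * q j).coeff n = 0 := by
        intro j hj
        rw [Polynomial.coeff_C_mul,
          Polynomial.coeff_eq_zero_of_natDegree_lt (by rw [hdeg]; exact Finset.mem_range.mp hj)]
        ring
      rw [Finset.sum_eq_zero h1, Polynomial.coeff_C_mul] at h0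
      have hq1 : (q n).coeff n = 1 := by
        have := (hm n).coeff_natDegree
        rwa [hdeg] at this
      rw [hq1] at h0; simpa using h0
    rcases Nat.lt_succ_iff_lt_or_eq.mp hk with h | h
    · apply ih c q hm hdeg _ k h
      have h2 := hsum
      rw [Finset.sum_range_succ, hcn] at h2
      simpa using h2
    · rw [h]; exact hcn

lemma key_step {D : Type*} [CommRing D]
    (Φ : ∀ k : ℕ, Polynomial D → MvPolynomial (Fin (k + 1)) D) (hΦ : IsDivDiff D Φ)
    (g : D[X]) (b : ℕ → D) (k : ℕ) :
    MvPolynomial.aeval (fun i : Fin (k+1) => if (i:ℕ) < k then Polynomial.C (b i) else X) (Φ k g)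
      = Polynomial.C (MvPolynomial.eval (fun i : Fin (k+1) => b i) (Φ k g))
        + (X - Polynomial.C (b k)) *
          MvPolynomial.aeval (fun i : Fin (k+2) => if (i:ℕ) < k+1 then Polynomial.C (b i) else X)
            (Φ (k+1) g) := by
  have h := hΦ.2 k g
  have h2 := congrArg (MvPolynomial.aeval
      (fun i : Fin (k+2) => if (i:ℕ) < k+1 then Polynomial.C (b i) else X)) h
  simp only [map_mul, map_sub, MvPolynomial.aeval_X, MvPolynomial.aeval_rename,
    Fin.coe_castSucc, Fin.val_last, Nat.lt_succ_self, if_pos, lt_irrefl, if_neg,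
    if_true, if_false] at h2
  have e1 : ((fun i : Fin (k+2) => if (i:ℕ) < k+1 then Polynomial.C (b i) else X) ∘ Fin.castSucc)
      = fun i : Fin (k+1) => Polynomial.C (b i) := by
    funext i
    simp [Fin.coe_castSucc, i.isLt, not_lt.mpr i.is_le]
  have e2 : ((fun i : Fin (k+2) => if (i:ℕ) < k+1 then Polynomial.C (b i) else X) ∘
      (fun i : Fin (k+1) => if i = Fin.last k then Fin.last (k + 1) else Fin.castSucc i))
      = fun i : Fin (k+1) => if (i:ℕ) < k then Polynomial.C (b i) else X := by
    funext i
    by_cases hi : i = Fin.last k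
    · subst hi; simp
    · have hlt : (i:ℕ) < k := by
        have h1 := i.isLt
        have h2 : (i:ℕ) ≠ k := fun hc => hi (Fin.ext hc)
        omega
      simp [Function.comp, hi, hlt, Nat.lt_succ_of_lt hlt]
  rw [e1, e2, aeval_C_eval] at h2
  -- h2 : P(k+1) * (C (b k) - X) = C (c k) - P k
  linear_combination h2

lemma newton {D : Type*} [CommRing D]
    (Φ : ∀ k : ℕ, Polynomial D → MvPolynomial (Fin (k + 1)) D) (hΦ : IsDivDiff D Φ)
    (g : D[X]) (b : ℕ → D) (m : ℕ) :
    g = (∑ k ∈ Finset.range m,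
          Polynomial.C (MvPolynomial.eval (fun i : Fin (k+1) => b i) (Φ k g)) *
            ∏ i ∈ Finset.range k, (X - Polynomial.C (b i)))
      + (MvPolynomial.aeval (fun i : Fin (m+1) => if (i:ℕ) < m then Polynomial.C (b i) else X)
            (Φ m g)) * ∏ i ∈ Finset.range m, (X - Polynomial.C (b i)) := by
  induction m with
  | zero =>
    simp only [Finset.range_zero, Finset.sum_empty, Finset.prod_empty, zero_add, mul_one]
    rw [hΦ.1, ← Polynomial.aeval_algHom_apply, MvPolynomial.aeval_X,
      if_neg (Nat.not_lt_zero _), Polynomial.aeval_X_left_apply]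
  | succ m ih =>
    rw [key_step Φ hΦ g b m] at ih
    conv_lhs => rw [ih]
    rw [Finset.sum_range_succ, Finset.prod_range_succ]
    ring

set_option maxHeartbeats 1000000 in
theorem mem_span_prod_iff_divDiff (D : Type*) [CommRing D] [IsDomain D]
    (Φ : ∀ k : ℕ, Polynomial D → MvPolynomial (Fin (k + 1)) D) (hΦ : IsDivDiff D Φ)
    (g : D[X]) (d : D) (hd : d ≠ 0) (n : ℕ) (a : Fin n → D) :
    g ∈ Ideal.span {Polynomial.C d, ∏ i, (X - C (a i))} ↔
      ∀ k, (hk : k < n) →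
        d ∣ MvPolynomial.eval (fun i : Fin (k + 1) => a ⟨i, by omega⟩) (Φ k g) := by
  classical
  set b : ℕ → D := fun i => if h : i < n then a ⟨i, h⟩ else 0 with hb
  set c : ℕ → D := fun k => MvPolynomial.eval (fun i : Fin (k+1) => b i) (Φ k g) with hc
  set q : ℕ → D[X] := fun k => ∏ i ∈ Finset.range k, (X - Polynomial.C (b i)) with hqdef
  -- the product in the statement equals q n
  have hprod : (∏ i : Fin n, (X - C (a i))) = q n := by
    show _ = ∏ i ∈ Finset.range n, (X - Polynomial.C (b i))
    rw [← Fin.prod_univ_eq_prod_range (fun i => X - Polynomial.C (b i)) n]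
    apply Finset.prod_congr rfl
    intro i _
    congr 1
    simp [hb, i.isLt]
  -- the divided difference values in the statement equal c k
  have heval : ∀ k (hk : k < n),
      MvPolynomial.eval (fun i : Fin (k + 1) => a ⟨i, by omega⟩) (Φ k g) = c k := by
    intro k hk
    have hfun : (fun i : Fin (k + 1) => a ⟨i, by omega⟩) = (fun i : Fin (k + 1) => b i) := by
      funext i
      have hi : (i : ℕ) < n := by omega
      simp [hb, hi]
    rw [hfun, hc]
  -- auxiliary facts about q
  have hqmonic : ∀ k, (q k).Monic := fun k =>
    monic_prod_of_monic _ _ (fun i _ => monic_X_sub_C (b i))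
  have hqdeg : ∀ k, (q k).natDegree = k := by
    intro k
    rw [hqdef, Polynomial.natDegree_prod_of_monic _ _ (fun i _ => monic_X_sub_C (b i))]
    simp
  set P : D[X] := MvPolynomial.aeval
      (fun i : Fin (n+1) => if (i:ℕ) < n then Polynomial.C (b i) else X) (Φ n g) with hP
  have hnewton : g = (∑ k ∈ Finset.range n, Polynomial.C (c k) * q k) + P * q n := by
    rw [newton Φ hΦ g b n]
  rw [hprod]
  constructor
  · -- forward direction
    intro hmem k hk
    rw [heval k hk]
    obtain ⟨u, v, huv⟩ := Ideal.mem_span_pair.mp hmem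
    set π : D →+* D ⧸ Ideal.span {d} := Ideal.Quotient.mk (Ideal.span {d}) with hπ
    suffices hz : π (c k) = 0 by
      rw [hπ, Ideal.Quotient.eq_zero_iff_mem, Ideal.mem_span_singleton] at hz
      exact hz
    rcases subsingleton_or_nontrivial (D ⧸ Ideal.span {d}) with hs | hns
    · exact Subsingleton.elim _ _
    · have key : (∑ j ∈ Finset.range n, Polynomial.C (c j) * q j)
          = u * Polynomial.C d + (v - P) * q n := by
        linear_combination -hnewton - huv
      have hmap := congrArg (Polynomial.map π) key
      have hπd : π d = 0 := by
        rw [hπ, Ideal.Quotient.eq_zero_iff_mem]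
        exact Ideal.mem_span_singleton_self d
      rw [Polynomial.map_add, Polynomial.map_mul, Polynomial.map_mul,
        Polynomial.map_C, hπd, Polynomial.C_0, mul_zero, zero_add,
        Polynomial.map_sum] at hmap
      simp only [Polynomial.map_mul, Polynomial.map_C] at hmap
      -- degree argument: map π (v - P) = 0
      set w : Polynomial (D ⧸ Ideal.span {d}) := (v - P).map π with hw
      set Q : ℕ → Polynomial (D ⧸ Ideal.span {d}) := fun j => (q j).map π with hQ
      have hQmonic : ∀ j, (Q j).Monic := fun j => (hqmonic j).map π
      have hQdeg : ∀ j, (Q j).natDegree = j := fun j => by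
        rw [hQ]; rw [(hqmonic j).natDegree_map]; exact hqdeg j
      have hsum0 : (∑ j ∈ Finset.range n, Polynomial.C (π (c j)) * Q j) = 0 := by
        have hw0 : w = 0 := by
          by_contra hw0
          have hdegS : (∑ j ∈ Finset.range n, Polynomial.C (π (c j)) * Q j).degree
              < (n : WithBot ℕ) := by
            refine lt_of_le_of_lt (Polynomial.degree_sum_le _ _) ?_
            rw [Finset.sup_lt_iff (by exact WithBot.bot_lt_coe n)]
            intro j hj
            calc (Polynomial.C (π (c j)) * Q j).degree
                ≤ (Polynomial.C (π (c j))).degree + (Q j).degree := Polynomial.degree_mul_le _ _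
              _ ≤ 0 + (Q j).degree := add_le_add Polynomial.degree_C_le le_rfl
              _ = (Q j).degree := zero_add _
              _ = (j : WithBot ℕ) := by
                  rw [Polynomial.degree_eq_natDegree (hQmonic j).ne_zero, hQdeg j]
              _ < (n : WithBot ℕ) := by
                  exact_mod_cast Finset.mem_range.mp hj
          have hdegS2 : (n : WithBot ℕ) ≤ (w * Q n).degree := by
            rw [(hQmonic n).degree_mul, Polynomial.degree_eq_natDegree (hQmonic n).ne_zero,
              hQdeg n]
            exact le_add_of_nonneg_left (Polynomial.zero_le_degree_iff.mpr hw0)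
          rw [← hmap] at hdegS2
          exact absurd hdegS2 (not_le.mpr hdegS)
        rw [hmap, hw0, zero_mul]
      exact indep n (fun j => π (c j)) Q hQmonic hQdeg hsum0 k hk
  · -- backward direction
    intro hdvd
    have hdvd' : ∀ k, k < n → d ∣ c k := fun k hk => by
      rw [← heval k hk]; exact hdvd k hk
    rw [hnewton]
    apply Ideal.add_mem
    · apply Ideal.sum_mem
      intro k hk
      obtain ⟨e, he⟩ := hdvd' k (Finset.mem_range.mp hk)
      have : Polynomial.C (c k) * q k = Polynomial.C d * (Polynomial.C e * q k) := by
        rw [he, Polynomial.C_mul]; ring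
      rw [this]
      exact Ideal.mul_mem_right _ _ (Ideal.subset_span (Set.mem_insert _ _))
    · rw [mul_comm]
      exact Ideal.mul_mem_right _ _
        (Ideal.subset_span (Set.mem_insert_of_mem _ rfl))
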